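/- Let q be a prime power, k ≥ 2 an integer, and t = ⌊(k+2)/4⌋. Then the number N_{k,q} of connected components of the graph D(k,q) satisfies N_{k,q} ≥ q^{t−1}. -/

import Mathlib

/-- Extend a vector `Fin k → F` to `ℕ → F` by zeros. -/
def extD {F : Type} [Zero F] {k : ℕ} (v : Fin k → F) : ℕ → F :=
  fun m => if h : m < k then v ⟨m, h⟩ else 0

/-- Right-hand side of the `m`-th incidence equation of `D(k,q)`
(coordinates are numbered from `0`, so the `m`-th equation concerns the
coordinate with index `m`). -/
def rhsD {F : Type} [Mul F] (p l : ℕ → F) : ℕ → F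
  | 1 => l 0 * p 0
  | 2 => l 1 * p 0
  | m => if m % 4 = 0 ∨ m % 4 = 3 then l 0 * p (m - 2) else l (m - 2) * p 0

/-- The incidence relation between a point `p` and a line `l`:
the first `k - 1` incidence equations hold. -/
def incD {F : Type} [Field F] (k : ℕ) (p l : Fin k → F) : Prop :=
  ∀ m, 1 ≤ m → m < k → extD l m - extD p m = rhsD (extD p) (extD l) m

/-- The bipartite graph `D(k,q)`; vertices are points (`Sum.inl`) and
lines (`Sum.inr`), both copies of `GF(q)^k`. -/
def DGraph (k : ℕ) (F : Type) [Field F] :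
    SimpleGraph ((Fin k → F) ⊕ (Fin k → F)) where
  Adj x y :=
    match x, y with
    | Sum.inl p, Sum.inr l => incD k p l
    | Sum.inr l, Sum.inl p => incD k p l
    | Sum.inl _, Sum.inl _ => False
    | Sum.inr _, Sum.inr _ => False
  symm := by constructor; rintro (p | l) (p' | l') h <;> exact h
  loopless := by constructor; rintro (p | l) h <;> exact h

namespace Stmt4

lemma rhsD_ge3 {F : Type} [Mul F] (p l : ℕ → F) (m : ℕ) (hm : 3 ≤ m) :
    rhsD p l m = if m % 4 = 0 ∨ m % 4 = 3 then l 0 * p (m - 2) else l (m - 2) * p 0 := by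
  match m, hm with
  | (m+3), _ => rfl

variable {F : Type} [Field F]

/-- `u_{ii}` coordinate (with `u_{11}` convention for `i ≤ 1`). -/
def dd (v : ℕ → F) : ℕ → F
  | 0 => v 1
  | 1 => v 1
  | (i+2) => v (4*i + 4)

/-- `u'_{ii}` coordinate (with `u'_{11} = u_{11}` convention). -/
def dd' (v : ℕ → F) : ℕ → F
  | 0 => v 1
  | 1 => v 1
  | (i+2) => v (4*i + 5)

/-- `u_{i,i+1}` coordinate, with `ss v 0 = v 0`. -/
def ss (v : ℕ → F) : ℕ → F
  | 0 => v 0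
  | (i+1) => v (4*i + 2)

/-- `u_{i+1,i}` coordinate, with `ww v 0 = v 0`. -/
def ww (v : ℕ → F) : ℕ → F
  | 0 => v 0
  | (i+1) => v (4*i + 3)

/-- The `r = n+2` invariant, point version. -/
def invP (n : ℕ) (v : ℕ → F) : F :=
  dd v (n+2) - dd' v (n+2) - v 0 * ww v (n+1)
    + ∑ j ∈ Finset.range (n+1), dd v (j+1) * dd' v (n+1-j)
    - ∑ j ∈ Finset.range n, ss v (j+1) * ww v (n-j)

/-- The `r = n+2` invariant, line version. -/
def invL (n : ℕ) (v : ℕ → F) : F :=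
  dd v (n+2) - dd' v (n+2) - v 0 * ss v (n+1)
    + ∑ j ∈ Finset.range (n+1), dd v (j+1) * dd' v (n+1-j)
    - ∑ j ∈ Finset.range n, ss v (j+1) * ww v (n-j)

lemma ring_id {R : Type} [CommRing R] (n : ℕ) (x π : R) (a b s w W : ℕ → R)
    (hW0 : W 0 = x) (hW : ∀ m, 1 ≤ m → m ≤ n + 1 → W m = w m + x * b (m - 1))
    (hs0 : s 0 = π) :
    (a (n+1) + x * s (n+1)) - (b (n+1) + π * W (n+1))
        - x * (s (n+1) + π * (a n + x * s n))
        + ∑ j ∈ Finset.range (n+1), (a j + x * s j) * (b (n-j) + π * W (n-j))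
        - ∑ j ∈ Finset.range n, (s (j+1) + π * (a j + x * s j)) * W (n-j)
      = a (n+1) - b (n+1) - π * w (n+1)
        + ∑ j ∈ Finset.range (n+1), a j * b (n-j)
        - ∑ j ∈ Finset.range n, s (j+1) * w (n-j) := by
  have h1 : ∑ j ∈ Finset.range (n+1), (a j + x * s j) * (b (n-j) + π * W (n-j))
      = ∑ j ∈ Finset.range (n+1), (a j * b (n-j) + (x * (s j * b (n-j))
          + (π * (a j * W (n-j)) + π * x * (s j * W (n-j))))) :=
    Finset.sum_congr rfl (fun j _ => by ring)
  have h2 : ∑ j ∈ Finset.range n, (s (j+1) + π * (a j + x * s j)) * W (n-j)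
      = ∑ j ∈ Finset.range n, (s (j+1) * w (n-j) + (x * (s (j+1) * b (n-(j+1)))
          + (π * (a j * W (n-j)) + π * x * (s j * W (n-j))))) := by
    refine Finset.sum_congr rfl (fun j hj => ?_)
    rw [Finset.mem_range] at hj
    rw [hW (n-j) (by omega) (by omega), show n - j - 1 = n - (j+1) by omega]
    ring
  rw [h1, h2]
  rw [Finset.sum_add_distrib, Finset.sum_add_distrib, Finset.sum_add_distrib,
      Finset.sum_add_distrib, Finset.sum_add_distrib, Finset.sum_add_distrib]
  have P1 : ∑ j ∈ Finset.range (n+1), x * (s j * b (n-j))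
      = (∑ j ∈ Finset.range n, x * (s (j+1) * b (n-(j+1)))) + x * (s 0 * b (n-0)) :=
    Finset.sum_range_succ' _ n
  have P2 : ∑ j ∈ Finset.range (n+1), π * (a j * W (n-j))
      = (∑ j ∈ Finset.range n, π * (a j * W (n-j))) + π * (a n * W (n-n)) :=
    Finset.sum_range_succ _ n
  have P3 : ∑ j ∈ Finset.range (n+1), π * x * (s j * W (n-j))
      = (∑ j ∈ Finset.range n, π * x * (s j * W (n-j))) + π * x * (s n * W (n-n)) :=
    Finset.sum_range_succ _ n
  rw [P1, P2, P3, Nat.sub_zero, Nat.sub_self, hW0, hs0,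
      hW (n+1) (by omega) (by omega), Nat.add_sub_cancel]
  ring

end Stmt4

namespace Stmt4
variable {F : Type} [Field F]

lemma key {k n : ℕ} (hn : 4*n + 6 ≤ k) (p l : Fin k → F) (h : incD k p l) :
    invL n (extD l) = invP n (extD p) := by
  set P := extD p with hPdef
  set L := extD l with hLdef
  have E : ∀ m, 1 ≤ m → m ≤ 4*n+5 → L m = P m + rhsD P L m := by
    intro m h1 h2
    exact sub_eq_iff_eq_add'.mp (h m h1 (by omega))
  have h10 : L 1 = P 1 + L 0 * P 0 := E 1 le_rfl (by omega)
  have h20 : L 2 = P 2 + L 1 * P 0 := E 2 (by omega) (by omega)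
  have hR1 : ∀ j, j ≤ n → dd L (j+2) = dd P (j+2) + L 0 * ss P (j+1) := by
    intro j hj
    show L (4*j+4) = P (4*j+4) + L 0 * P (4*j+2)
    have e := E (4*j+4) (by omega) (by omega)
    rw [rhsD_ge3 _ _ _ (by omega), if_pos (Or.inl (by omega)),
        show 4*j+4-2 = 4*j+2 by omega] at e
    exact e
  have hR2 : ∀ j, j ≤ n → dd' L (j+2) = dd' P (j+2) + P 0 * ww L (j+1) := by
    intro j hj
    show L (4*j+5) = P (4*j+5) + P 0 * L (4*j+3)
    have e := E (4*j+5) (by omega) (by omega)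
    rw [rhsD_ge3 _ _ _ (by omega), if_neg (by omega),
        show 4*j+5-2 = 4*j+3 by omega] at e
    rw [e]; ring
  have hR3 : ∀ j, j ≤ n → ss L (j+1) = ss P (j+1) + P 0 * dd L (j+1) := by
    intro j hj
    cases j with
    | zero =>
      show L 2 = P 2 + P 0 * L 1
      rw [h20]; ring
    | succ i =>
      show L (4*i+6) = P (4*i+6) + P 0 * L (4*i+4)
      have e := E (4*i+6) (by omega) (by omega)
      rw [rhsD_ge3 _ _ _ (by omega), if_neg (by omega),
          show 4*i+6-2 = 4*i+4 by omega] at e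
      rw [e]; ring
  have hR4 : ∀ j, j ≤ n → ww L (j+1) = ww P (j+1) + L 0 * dd' P (j+1) := by
    intro j hj
    cases j with
    | zero =>
      show L 3 = P 3 + L 0 * P 1
      have e := E 3 (by omega) (by omega)
      rw [rhsD_ge3 _ _ _ (by omega), if_pos (Or.inr (by omega))] at e
      exact e
    | succ i =>
      show L (4*i+7) = P (4*i+7) + L 0 * P (4*i+5)
      have e := E (4*i+7) (by omega) (by omega)
      rw [rhsD_ge3 _ _ _ (by omega), if_pos (Or.inr (by omega)),
          show 4*i+7-2 = 4*i+5 by omega] at e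
      exact e
  have u1 : ∀ i, i ≤ n+1 → dd L (i+1) = dd P (i+1) + L 0 * ss P i := by
    intro i hi
    cases i with
    | zero => exact h10
    | succ j => exact hR1 j (by omega)
  have u2 : ∀ i, i ≤ n+1 → dd' L (i+1) = dd' P (i+1) + P 0 * ww L i := by
    intro i hi
    cases i with
    | zero => show L 1 = P 1 + P 0 * L 0; rw [h10]; ring
    | succ j => exact hR2 j (by omega)
  -- assemble
  have e1 : dd L (n+2) = dd P (n+2) + L 0 * ss P (n+1) := u1 (n+1) le_rfl
  have e2 : dd' L (n+2) = dd' P (n+2) + P 0 * ww L (n+1) := u2 (n+1) le_rfl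
  have e3 : ss L (n+1) = ss P (n+1) + P 0 * (dd P (n+1) + L 0 * ss P n) := by
    rw [hR3 n le_rfl, u1 n (by omega)]
  have hsum1 : ∑ j ∈ Finset.range (n+1), dd L (j+1) * dd' L (n+1-j)
      = ∑ j ∈ Finset.range (n+1),
          (dd P (j+1) + L 0 * ss P j) * (dd' P ((n-j)+1) + P 0 * ww L (n-j)) := by
    refine Finset.sum_congr rfl (fun j hj => ?_)
    rw [Finset.mem_range] at hj
    rw [show n+1-j = (n-j)+1 by omega, u1 j (by omega), u2 (n-j) (by omega)]
  have hsum2 : ∑ j ∈ Finset.range n, ss L (j+1) * ww L (n-j)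
      = ∑ j ∈ Finset.range n,
          (ss P (j+1) + P 0 * (dd P (j+1) + L 0 * ss P j)) * ww L (n-j) := by
    refine Finset.sum_congr rfl (fun j hj => ?_)
    rw [Finset.mem_range] at hj
    rw [hR3 j (by omega), u1 j (by omega)]
  have hsum3 : ∑ j ∈ Finset.range (n+1), dd P (j+1) * dd' P (n+1-j)
      = ∑ j ∈ Finset.range (n+1), dd P (j+1) * dd' P ((n-j)+1) := by
    refine Finset.sum_congr rfl (fun j hj => ?_)
    rw [Finset.mem_range] at hj
    rw [show n+1-j = (n-j)+1 by omega]
  have hW : ∀ m, 1 ≤ m → m ≤ n + 1 → ww L m = ww P m + L 0 * dd' P ((m-1)+1) := by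
    intro m h1 h2
    obtain ⟨j, rfl⟩ : ∃ j, m = j + 1 := ⟨m - 1, by omega⟩
    simpa using hR4 j (by omega)
  rw [invL, invP, hsum1, hsum2, hsum3, e1, e2, e3]
  exact ring_id n (L 0) (P 0) (fun j => dd P (j+1)) (fun j => dd' P (j+1))
    (ss P) (ww P) (ww L) rfl hW rfl

end Stmt4

namespace Stmt4
variable {F : Type} [Field F]

/-- The witness point whose invariants realize a prescribed vector `a`. -/
def paD (k t' : ℕ) (a : Fin t' → F) : Fin k → F :=
  fun m => if m.val % 4 = 1 ∧ 4 < m.val then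
    (if h : m.val/4 - 1 < t' then -(a ⟨m.val/4 - 1, h⟩) else 0) else 0

lemma invP_pa {k t' : ℕ} (hk : 4*t' + 2 ≤ k) (a : Fin t' → F) (n : ℕ) (hn : n < t') :
    invP n (extD (paD k t' a)) = a ⟨n, hn⟩ := by
  set v := extD (paD k t' a) with hv
  have hval : ∀ m, v m = if m % 4 = 1 ∧ 4 < m then
      (if h : m/4 - 1 < t' then -(a ⟨m/4 - 1, h⟩) else 0) else 0 := by
    intro m
    rw [hv]
    unfold extD paD
    by_cases hm : m < k
    · rw [dif_pos hm]
    · rw [dif_neg hm]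
      by_cases hc : m % 4 = 1 ∧ 4 < m
      · rw [if_pos hc, dif_neg (by omega)]
      · rw [if_neg hc]
  have hz : ∀ m, m % 4 ≠ 1 ∨ m ≤ 4 → v m = 0 := by
    intro m hm
    rw [hval m, if_neg (by omega)]
  have hdd : ∀ i, dd v i = 0 := by
    intro i
    match i with
    | 0 => exact hz 1 (by omega)
    | 1 => exact hz 1 (by omega)
    | (i+2) => exact hz (4*i+4) (by omega)
  have hss : ∀ i, ss v i = 0 := by
    intro i
    match i with
    | 0 => exact hz 0 (by omega)
    | (i+1) => exact hz (4*i+2) (by omega)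
  have hww : ∀ i, ww v i = 0 := by
    intro i
    match i with
    | 0 => exact hz 0 (by omega)
    | (i+1) => exact hz (4*i+3) (by omega)
  have hdd' : dd' v (n+2) = -(a ⟨n, hn⟩) := by
    show v (4*n+5) = _
    rw [hval, if_pos (by omega), dif_pos (show (4*n+5)/4 - 1 < t' by omega)]
    congr 1
    exact congrArg a (Fin.ext (show (4*n+5)/4-1 = n by omega))
  rw [invP, hdd, hdd', hz 0 (by omega),
      Finset.sum_eq_zero (fun j _ => by rw [hdd]; ring),
      Finset.sum_eq_zero (fun j _ => by rw [hss]; ring)]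
  ring

end Stmt4

open Stmt4

/-- With `t = ⌊(k+2)/4⌋`, the number of connected components of `D(k,q)` is
at least `q^(t-1)`. -/
theorem statement4 (q k : ℕ) (hk : 2 ≤ k) (F : Type) [Field F] [Fintype F]
    (hF : Fintype.card F = q) :
    q ^ ((k + 2) / 4 - 1) ≤ Nat.card (DGraph k F).ConnectedComponent := by
  classical
  set t' := (k + 2) / 4 - 1 with ht'
  have hkt : 4 * t' + 2 ≤ k := by omega
  let φ : ((Fin k → F) ⊕ (Fin k → F)) → (Fin t' → F) := fun v j =>
    match v with
    | Sum.inl p => invP j.val (extD p)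
    | Sum.inr l => invL j.val (extD l)
  have hb : ∀ j : Fin t', 4 * j.val + 6 ≤ k := by
    intro j
    have := j.isLt
    omega
  have hadj : ∀ v w, (DGraph k F).Adj v w → φ v = φ w := by
    rintro (p | l) (p' | l') h
    · exact h.elim
    · exact funext fun j => (key (hb j) p l' h).symm
    · exact funext fun j => key (hb j) p' l h
    · exact h.elim
  have hwalk : ∀ v w, (DGraph k F).Walk v w → φ v = φ w := by
    intro v w pp
    induction pp with
    | nil => rfl
    | cons h _ ih => exact (hadj _ _ h).trans ih
  let Φ : (DGraph k F).ConnectedComponent → (Fin t' → F) :=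
    SimpleGraph.ConnectedComponent.lift φ (fun v w pp _ => hwalk v w pp)
  have hsurj : Function.Surjective Φ := by
    intro a
    refine ⟨(DGraph k F).connectedComponentMk (Sum.inl (paD k t' a)), ?_⟩
    funext j
    show invP j.val (extD (paD k t' a)) = a j
    rw [invP_pa hkt a j.val j.isLt]
  haveI : Finite ((DGraph k F).ConnectedComponent) :=
    Finite.of_surjective (DGraph k F).connectedComponentMk Quot.mk_surjective
  have hcard := Nat.card_le_card_of_surjective Φ hsurj
  have : Nat.card (Fin t' → F) = q ^ t' := by
    rw [Nat.card_eq_fintype_card]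
    simp [hF]
  omega
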